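/- With Λ(0) = (1/t_f)(−I + Σ₀^{-1/2}(Σ₀^{1/2}Σ_fΣ₀^{1/2})^{1/2}Σ₀^{-1/2}) invertible and M = Λ(0)^{-1}Σ₀^{-1}Λ(0)^{-1}, one has t_f·trace(M^{-1}) = t_f·trace(Λ(0)Σ₀Λ(0)) = (1/t_f)·trace(Σ₀ + Σ_f − 2(Σ₀^{1/2}Σ_fΣ₀^{1/2})^{1/2}). -/

import Mathlib

set_option autoImplicit false
open Matrix
noncomputable section

open scoped ComplexOrder in
/-- The square root of a positive semidefinite matrix, as `Matrix.PosSemidef.sqrt` was defined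
in Mathlib (December 2024); Mathlib has since removed it in favour of `CFC.sqrt`. -/
noncomputable def Matrix.PosSemidef.sqrt {m 𝕜 : Type*} [Fintype m] [DecidableEq m] [RCLike 𝕜]
    {A : Matrix m m 𝕜} (hA : A.PosSemidef) : Matrix m m 𝕜 :=
  hA.1.eigenvectorUnitary.1 * diagonal ((↑) ∘ (√·) ∘ hA.1.eigenvalues) *
    (star hA.1.eigenvectorUnitary : Matrix m m 𝕜)

open scoped ComplexOrder in
theorem Matrix.PosSemidef.posSemidef_sqrt {m 𝕜 : Type*} [Fintype m] [DecidableEq m] [RCLike 𝕜]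
    {A : Matrix m m 𝕜} (hA : A.PosSemidef) : hA.sqrt.PosSemidef := by
  unfold Matrix.PosSemidef.sqrt
  have hd : (diagonal ((↑) ∘ (√·) ∘ hA.1.eigenvalues) : Matrix m m 𝕜).PosSemidef := by
    rw [posSemidef_diagonal_iff]
    intro i
    simp only [Function.comp_apply, RCLike.ofReal_nonneg]
    exact Real.sqrt_nonneg _
  have h := hd.mul_mul_conjTranspose_same (hA.1.eigenvectorUnitary.1)
  simpa [Matrix.star_eq_conjTranspose] using h

open scoped ComplexOrder in
theorem Matrix.PosSemidef.sqrt_mul_self {m 𝕜 : Type*} [Fintype m] [DecidableEq m] [RCLike 𝕜]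
    {A : Matrix m m 𝕜} (hA : A.PosSemidef) : hA.sqrt * hA.sqrt = A := by
  unfold Matrix.PosSemidef.sqrt
  have hU : (star hA.1.eigenvectorUnitary : Matrix m m 𝕜) * hA.1.eigenvectorUnitary.1 = 1 :=
    Unitary.coe_star_mul_self _
  conv_rhs => rw [hA.1.spectral_theorem, Unitary.conjStarAlgAut_apply]
  rw [show hA.1.eigenvectorUnitary.1 * diagonal ((↑) ∘ (√·) ∘ hA.1.eigenvalues) *
      (star hA.1.eigenvectorUnitary : Matrix m m 𝕜) * (hA.1.eigenvectorUnitary.1 *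
      diagonal ((↑) ∘ (√·) ∘ hA.1.eigenvalues) * (star hA.1.eigenvectorUnitary : Matrix m m 𝕜))
      = hA.1.eigenvectorUnitary.1 * (diagonal ((↑) ∘ (√·) ∘ hA.1.eigenvalues) *
      ((star hA.1.eigenvectorUnitary : Matrix m m 𝕜) * hA.1.eigenvectorUnitary.1) *
      diagonal ((↑) ∘ (√·) ∘ hA.1.eigenvalues : m → 𝕜)) *
      (star hA.1.eigenvectorUnitary : Matrix m m 𝕜) by simp only [Matrix.mul_assoc],
    hU, Matrix.mul_one, diagonal_mul_diagonal]
  congr 3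
  funext i
  simp only [Function.comp_apply, ← RCLike.ofReal_mul, Real.mul_self_sqrt (hA.eigenvalues_nonneg i)]

/-- The middle matrix `Σ₀^{1/2} Σf Σ₀^{1/2}` is positive semidefinite. -/
theorem midPosSemidef {n : ℕ} {S0 Sf : Matrix (Fin n) (Fin n) ℝ}
    (h0 : S0.PosDef) (hf : Sf.PosDef) :
    (h0.posSemidef.sqrt * Sf * h0.posSemidef.sqrt).PosSemidef := by
  have h := hf.posSemidef.mul_mul_conjTranspose_same h0.posSemidef.sqrt
  rwa [h0.posSemidef.posSemidef_sqrt.isHermitian] at h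

/-- `Λ(0) = (1/t_f)(−I + Σ₀^{-1/2}(Σ₀^{1/2}ΣfΣ₀^{1/2})^{1/2}Σ₀^{-1/2})`. -/
noncomputable def lam0 {n : ℕ} {S0 Sf : Matrix (Fin n) (Fin n) ℝ}
    (h0 : S0.PosDef) (hf : Sf.PosDef) (tf : ℝ) : Matrix (Fin n) (Fin n) ℝ :=
  (1 / tf) • (-1 + (h0.posSemidef.sqrt)⁻¹ * (midPosSemidef h0 hf).sqrt
    * (h0.posSemidef.sqrt)⁻¹)

/-- `M = Λ(0)^{-1} Σ₀^{-1} Λ(0)^{-1}`. -/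
noncomputable def Mmat {n : ℕ} {S0 Sf : Matrix (Fin n) (Fin n) ℝ}
    (h0 : S0.PosDef) (hf : Sf.PosDef) (tf : ℝ) : Matrix (Fin n) (Fin n) ℝ :=
  (lam0 h0 hf tf)⁻¹ * S0⁻¹ * (lam0 h0 hf tf)⁻¹


lemma isUnit_sqrt {n : ℕ} {S0 : Matrix (Fin n) (Fin n) ℝ} (h0 : S0.PosDef) :
    IsUnit h0.posSemidef.sqrt := by
  rw [Matrix.isUnit_iff_isUnit_det, isUnit_iff_ne_zero]
  intro h
  have h2 : (h0.posSemidef.sqrt * h0.posSemidef.sqrt).det = S0.det := by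
    rw [h0.posSemidef.sqrt_mul_self]
  rw [Matrix.det_mul, h, mul_zero] at h2
  exact h0.det_pos.ne' h2.symm

/-- `t_f·trace(M^{-1}) = t_f·trace(Λ(0)Σ₀Λ(0))
= (1/t_f)·trace(Σ₀ + Σf − 2(Σ₀^{1/2}ΣfΣ₀^{1/2})^{1/2})`. -/
theorem stmt9 {n : ℕ} (S0 Sf : Matrix (Fin n) (Fin n) ℝ)
    (h0 : S0.PosDef) (hf : Sf.PosDef) (tf : ℝ) (htf : 0 < tf)
    (hinv : IsUnit (lam0 h0 hf tf)) :
    tf * ((Mmat h0 hf tf)⁻¹).trace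
        = tf * ((lam0 h0 hf tf) * S0 * (lam0 h0 hf tf)).trace ∧
    tf * ((lam0 h0 hf tf) * S0 * (lam0 h0 hf tf)).trace
        = (1 / tf) * (S0 + Sf - 2 • (midPosSemidef h0 hf).sqrt).trace := by
  have hAu : IsUnit h0.posSemidef.sqrt := isUnit_sqrt h0
  set A := h0.posSemidef.sqrt with hAdef
  set B := (midPosSemidef h0 hf).sqrt with hBdef
  have hAA : A * A = S0 := h0.posSemidef.sqrt_mul_self
  have hBB : B * B = A * Sf * A := (midPosSemidef h0 hf).sqrt_mul_self
  have hAd : IsUnit A.det := (Matrix.isUnit_iff_isUnit_det _).1 hAu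
  have hAi : A⁻¹ * A = 1 := Matrix.nonsing_inv_mul _ hAd
  have hAi' : A * A⁻¹ = 1 := Matrix.mul_nonsing_inv _ hAd
  set C : Matrix (Fin n) (Fin n) ℝ := -1 + A⁻¹ * B * A⁻¹ with hCdef
  have hL : lam0 h0 hf tf = (1 / tf) • C := rfl
  constructor
  · congr 2
    unfold Mmat
    rw [Matrix.mul_inv_rev, Matrix.mul_inv_rev,
      Matrix.nonsing_inv_nonsing_inv _ ((Matrix.isUnit_iff_isUnit_det _).1 hinv),
      Matrix.nonsing_inv_nonsing_inv _ ((Matrix.isUnit_iff_isUnit_det _).1 h0.isUnit),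
      Matrix.mul_assoc]
  · have h1 : C * A = -A + A⁻¹ * B := by
      rw [hCdef, Matrix.add_mul, Matrix.neg_mul, Matrix.one_mul,
        Matrix.mul_assoc, hAi, Matrix.mul_one]
    have h2 : A * C = -A + B * A⁻¹ := by
      rw [hCdef, Matrix.mul_add, Matrix.mul_neg, Matrix.mul_one,
        ← Matrix.mul_assoc, ← Matrix.mul_assoc, hAi', Matrix.one_mul]
    have key : C * S0 * C = A * A - A * (B * A⁻¹) - A⁻¹ * B * A
        + A⁻¹ * B * (B * A⁻¹) := by
      rw [← hAA]
      calc C * (A * A) * C = (C * A) * (A * C) := by noncomm_ring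
        _ = (-A + A⁻¹ * B) * (-A + B * A⁻¹) := by rw [h1, h2]
        _ = _ := by noncomm_ring
    have hlast : A⁻¹ * B * (B * A⁻¹) = Sf := by
      have : A⁻¹ * B * (B * A⁻¹) = A⁻¹ * (B * B) * A⁻¹ := by noncomm_ring
      rw [this, hBB]
      rw [← Matrix.mul_assoc, ← Matrix.mul_assoc, hAi, Matrix.one_mul,
        Matrix.mul_assoc, hAi', Matrix.mul_one]
    have t1 : (A * (B * A⁻¹)).trace = B.trace := by
      rw [Matrix.trace_mul_comm, Matrix.mul_assoc, hAi, Matrix.mul_one]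
    have t2 : (A⁻¹ * B * A).trace = B.trace := by
      rw [Matrix.trace_mul_cycle, hAi', Matrix.one_mul]
    have htr : (C * S0 * C).trace = (S0 + Sf - 2 • B).trace := by
      rw [key, hlast, Matrix.trace_add, Matrix.trace_sub, Matrix.trace_sub,
        t1, t2, hAA]
      simp only [Matrix.trace_sub, Matrix.trace_add, Matrix.trace_smul, smul_eq_mul]
      ring
    have hLSL : (lam0 h0 hf tf) * S0 * (lam0 h0 hf tf)
        = ((1 / tf) * (1 / tf)) • (C * S0 * C) := by
      rw [hL, Matrix.smul_mul, Matrix.smul_mul, Matrix.mul_smul, smul_smul]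
    rw [hLSL, Matrix.trace_smul, htr]
    simp only [smul_eq_mul]
    field_simp
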